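/- Let (B_x)_{x∈ℤ} be i.i.d. fair Bernoulli random variables with values in {−,+} (each sign with probability 1/2), and define the random linear order ≼ on ℤ by: x ≼ y iff (B_x = − and B_y = +) or (B_x = B_y and x ≤ y). Then for every h ≥ 1 and every π ∈ Av^{2h+1}(321), the probability that the restriction of ≼ to [−h,h] induces the pattern π — i.e., that for all i,j ∈ [1,2h+1], (i−h−1) ≼ (j−h−1) if and only if π_i ≤ π_j — equals P_321(π). -/

import Mathlib

open Finset Filter
open scoped Topology Classical

noncomputable section

/-- The permutation 231 (as a permutation of `Fin 3`, 0-indexed). -/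
def perm231 : Equiv.Perm (Fin 3) := ⟨![1, 2, 0], ![2, 0, 1], by decide, by decide⟩

/-- The permutation 321 (as a permutation of `Fin 3`, 0-indexed). -/
def perm321 : Equiv.Perm (Fin 3) := ⟨![2, 1, 0], ![2, 1, 0], by decide, by decide⟩

/-- `σ` contains the pattern `π`: some (not necessarily consecutive) subsequence of `σ`
is in the same relative order as `π`. -/
def Contains {k n : ℕ} (π : Equiv.Perm (Fin k)) (σ : Equiv.Perm (Fin n)) : Prop :=
  ∃ f : Fin k → Fin n, StrictMono f ∧ ∀ a b : Fin k, σ (f a) < σ (f b) ↔ π a < π b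

/-- `σ` avoids the pattern `π`. -/
def Avoids {k n : ℕ} (π : Equiv.Perm (Fin k)) (σ : Equiv.Perm (Fin n)) : Prop := ¬ Contains π σ

/-- The set `Avⁿ(ρ)` of `ρ`-avoiding permutations of size `n`. -/
def AvSet {k : ℕ} (ρ : Equiv.Perm (Fin k)) (n : ℕ) : Finset (Equiv.Perm (Fin n)) :=
  Finset.univ.filter fun σ => Avoids ρ σ

/-- The (0-indexed) value of `σ` at the (0-indexed) position `j`, with junk value `0`
out of range. -/
def pv {n : ℕ} (σ : Equiv.Perm (Fin n)) (j : ℕ) : ℕ :=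
  if h : j < n then (σ ⟨j, h⟩ : ℕ) else 0

/-- The length-`k` window of `σ` starting at the (0-indexed) position `i` is in the same
relative order as `π`, i.e. `pat_{[i+1,i+k]}(σ) = π` (in the 1-indexed notation). -/
def WindowMatch {k n : ℕ} (π : Equiv.Perm (Fin k)) (σ : Equiv.Perm (Fin n)) (i : ℕ) : Prop :=
  ∀ a b : Fin k, (pv σ (i + a) < pv σ (i + b) ↔ π a < π b)

/-- `π` occurs consecutively in `σ` at the (0-indexed) position `i`. -/
def IsOccAt {k n : ℕ} (π : Equiv.Perm (Fin k)) (σ : Equiv.Perm (Fin n)) (i : ℕ) : Prop :=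
  i + k ≤ n ∧ WindowMatch π σ i

/-- Number of consecutive occurrences of `π` in the (0-indexed) window `[lo, hi)` of `σ`.
This equals `c-occ(π, pat_{[lo+1,hi]}(σ))` in the notation of the paper. -/
def cOccWin {k n : ℕ} (π : Equiv.Perm (Fin k)) (σ : Equiv.Perm (Fin n)) (lo hi : ℕ) : ℕ :=
  ((Finset.range n).filter fun i => lo ≤ i ∧ i + k ≤ hi ∧ WindowMatch π σ i).card

/-- `c-occ(π,σ)`: the number of consecutive occurrences of `π` in `σ`. -/
def cOcc {k n : ℕ} (π : Equiv.Perm (Fin k)) (σ : Equiv.Perm (Fin n)) : ℕ := cOccWin π σ 0 n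

/-- `|LRMax(π)|`: the number of left-to-right maxima of `π`. -/
def lrMax {k : ℕ} (π : Equiv.Perm (Fin k)) : ℕ :=
  (Finset.univ.filter fun i : Fin k => ∀ j : Fin k, j < i → π j < π i).card

/-- `|RLMax(π)|`: the number of right-to-left maxima of `π`. -/
def rlMax {k : ℕ} (π : Equiv.Perm (Fin k)) : ℕ :=
  (Finset.univ.filter fun i : Fin k => ∀ j : Fin k, i < j → π j < π i).card

/-- `P_231(π) = 2^(|LRMax(π)| + |RLMax(π)|) / 2^(2|π|)`. -/
def P231 {k : ℕ} (π : Equiv.Perm (Fin k)) : ℝ :=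
  2 ^ (lrMax π + rlMax π) / 2 ^ (2 * k)

end

noncomputable section

/-- The number of descents of `τ`: indices `i` (1-indexed, `1 ≤ i ≤ k-1`) with
`τ_i > τ_{i+1}`. (Here `i : Fin k` is the 0-indexed position of the left entry.) -/
def numDescents {k : ℕ} (τ : Equiv.Perm (Fin k)) : ℕ :=
  (Finset.univ.filter fun i : Fin k =>
    ∃ h : (i : ℕ) + 1 < k, τ ⟨(i : ℕ) + 1, h⟩ < τ i).card

/-- `P_321(π)`: equal to `(|π|+1)/2^|π|` if `π` is the identity, `1/2^|π|` if `π⁻¹` has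
exactly one descent, and `0` otherwise. -/
def P321 {k : ℕ} (π : Equiv.Perm (Fin k)) : ℝ :=
  if π = 1 then (k + 1) / 2 ^ k
  else if numDescents π⁻¹ = 1 then 1 / 2 ^ k
  else 0

end

namespace LO321

variable {n : ℕ}

/-- A sign configuration `s` induces the pattern `π`. -/
def Matches (π : Equiv.Perm (Fin n)) (s : Fin n → Bool) : Prop :=
  ∀ i j : Fin n, ((s i = false ∧ s j = true) ∨ (s i = s j ∧ i ≤ j)) ↔ π i ≤ π j

/-- The sign configuration with `+` exactly at positions with value `≥ m`. -/
def sConf (π : Equiv.Perm (Fin n)) (m : ℕ) : Fin n → Bool :=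
  fun i => decide (m ≤ (π i : ℕ))

/-- `m` is a good threshold: the only possible descent of `π⁻¹` is between values
`m-1` and `m`. -/
def Good (π : Equiv.Perm (Fin n)) (m : ℕ) : Prop :=
  ∀ d : ℕ, ∀ hd : d + 1 < n, d + 1 ≠ m →
    π⁻¹ ⟨d, by omega⟩ < π⁻¹ ⟨d + 1, hd⟩

lemma good_chain {π : Equiv.Perm (Fin n)} {m : ℕ} (hg : Good π m) :
    ∀ k : ℕ, ∀ a b : Fin n, (b : ℕ) = (a : ℕ) + k + 1 →
      ((b : ℕ) < m ∨ m ≤ (a : ℕ)) → π⁻¹ a < π⁻¹ b := by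
  intro k
  induction k with
  | zero =>
    intro a b hb hcase
    have hd : (a : ℕ) + 1 < n := by have := b.isLt; omega
    have hne : (a : ℕ) + 1 ≠ m := by omega
    have := hg a hd hne
    have ha : (⟨(a : ℕ), by omega⟩ : Fin n) = a := rfl
    have hb' : (⟨(a : ℕ) + 1, hd⟩ : Fin n) = b := Fin.ext (by simp only [Fin.val_mk]; omega)
    rwa [ha, hb'] at this
  | succ k ih =>
    intro a b hb hcase
    have hc : (a : ℕ) + k + 1 < n := by have := b.isLt; omega
    set c : Fin n := ⟨(a : ℕ) + k + 1, hc⟩ with hcdef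
    have h1 : π⁻¹ a < π⁻¹ c := ih a c rfl (by simp only [hcdef]; omega)
    have hd : (c : ℕ) + 1 < n := by have := b.isLt; simp only [hcdef]; omega
    have hne : (c : ℕ) + 1 ≠ m := by simp only [hcdef]; omega
    have h2 := hg c hd hne
    have hc1 : (⟨(c : ℕ), by omega⟩ : Fin n) = c := rfl
    have hb' : (⟨(c : ℕ) + 1, hd⟩ : Fin n) = b := Fin.ext (by simp only [hcdef, Fin.val_mk]; omega)
    rw [hc1, hb'] at h2
    exact h1.trans h2

lemma good_mono {π : Equiv.Perm (Fin n)} {m : ℕ} (hg : Good π m)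
    {a b : Fin n} (hab : a < b) (hcase : (b : ℕ) < m ∨ m ≤ (a : ℕ)) :
    π⁻¹ a < π⁻¹ b := by
  have h1 : (a : ℕ) < b := hab
  exact good_chain hg ((b : ℕ) - (a : ℕ) - 1) a b (by omega) hcase

lemma matches_of_good {π : Equiv.Perm (Fin n)} {m : ℕ} (hg : Good π m) :
    Matches π (sConf π m) := by
  intro i j
  simp only [sConf, decide_eq_false_iff_not, decide_eq_true_eq, decide_eq_decide, not_le]
  constructor
  · rintro (⟨hi, hj⟩ | ⟨hij, hle⟩)
    · exact le_of_lt (by rw [Fin.lt_def]; omega)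
    · by_contra hcon
      push_neg at hcon
      have hsame : ((π i : ℕ) < m ∨ m ≤ (π j : ℕ)) := by omega
      have := good_mono hg hcon (by omega)
      simp only [Equiv.Perm.inv_def, Equiv.symm_apply_apply] at this
      exact absurd hle (not_le.mpr this)
  · intro hle
    rcases eq_or_lt_of_le hle with heq | hlt
    · right
      have : i = j := π.injective heq
      subst this
      exact ⟨Iff.rfl, le_refl i⟩
    · by_cases hsplit : (π i : ℕ) < m ∧ m ≤ (π j : ℕ)
      · exact Or.inl ⟨hsplit.1, hsplit.2⟩
      · right
        have hv : (π i : ℕ) < (π j : ℕ) := hlt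
        have hcase : ((π j : ℕ) < m ∨ m ≤ (π i : ℕ)) := by omega
        have := good_mono hg hlt hcase
        simp only [Equiv.Perm.inv_def, Equiv.symm_apply_apply] at this
        exact ⟨by omega, le_of_lt this⟩

lemma matches_elim {π : Equiv.Perm (Fin n)} {s : Fin n → Bool} (hm : Matches π s) :
    (∀ i j, s i = false → s j = true → π i < π j) ∧
    (∀ i j, s i = s j → (i ≤ j ↔ π i ≤ π j)) := by
  constructor
  · intro i j hi hj
    have h1 : π i ≤ π j := (hm i j).mp (Or.inl ⟨hi, hj⟩)
    rcases eq_or_lt_of_le h1 with heq | hlt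
    · exact absurd (congrArg s (π.injective heq)) (by simp [hi, hj])
    · exact hlt
  · intro i j hij
    constructor
    · intro hle
      exact (hm i j).mp (Or.inr ⟨hij, hle⟩)
    · intro hle
      rcases (hm i j).mpr hle with ⟨hi, hj⟩ | ⟨_, hle'⟩
      · rw [hij, hj] at hi; exact absurd hi (by simp)
      · exact hle'

lemma key_of_matches {π : Equiv.Perm (Fin n)} {s : Fin n → Bool} (hm : Matches π s) :
    ∀ i, s i = false ↔ (π i : ℕ) < (Finset.univ.filter fun i => s i = false).card := by
  classical
  obtain ⟨ha, hb⟩ := matches_elim hm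
  set F : Finset (Fin n) := Finset.univ.filter fun i => s i = false with hF
  set m := F.card with hmdef
  have hcardA : (F.image π).card = m := Finset.card_image_of_injective _ π.injective
  intro i
  constructor
  · intro hi
    -- Iic (π i) ⊆ F.image π
    have hsub : Finset.Iic (π i) ⊆ F.image π := by
      intro v hv
      rw [Finset.mem_Iic] at hv
      rw [Finset.mem_image]
      refine ⟨π⁻¹ v, ?_, by simp⟩
      rw [hF, Finset.mem_filter]
      refine ⟨Finset.mem_univ _, ?_⟩
      by_contra hc
      have hc' : s (π⁻¹ v) = true := by
        cases hsv : s (π⁻¹ v) with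
        | false => exact absurd hsv hc
        | true => rfl
      have := ha i (π⁻¹ v) hi hc'
      simp only [Equiv.Perm.inv_def, Equiv.apply_symm_apply] at this
      exact absurd hv (not_le.mpr this)
    have := Finset.card_le_card hsub
    rw [Fin.card_Iic, hcardA] at this
    omega
  · intro hvi
    by_contra hc
    have hi : s i = true := by
      cases hsv : s i with
      | false => exact absurd hsv hc
      | true => rfl
    have hsub : F.image π ⊆ Finset.Iio (π i) := by
      intro v hv
      rw [Finset.mem_image] at hv
      obtain ⟨j, hj, rfl⟩ := hv
      rw [hF, Finset.mem_filter] at hj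
      rw [Finset.mem_Iio]
      exact ha j i hj.2 hi
    have := Finset.card_le_card hsub
    rw [Fin.card_Iio, hcardA] at this
    omega

lemma good_of_matches {π : Equiv.Perm (Fin n)} {s : Fin n → Bool} (hm : Matches π s) :
    Good π ((Finset.univ.filter fun i => s i = false).card) := by
  classical
  obtain ⟨_, hb⟩ := matches_elim hm
  have key := key_of_matches hm
  set m := (Finset.univ.filter fun i => s i = false).card
  intro d hd hne
  set i : Fin n := π⁻¹ ⟨d, by omega⟩ with hidef
  set j : Fin n := π⁻¹ ⟨d + 1, hd⟩ with hjdef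
  have hπi : (π i : ℕ) = d := by simp [hidef]
  have hπj : (π j : ℕ) = d + 1 := by simp [hjdef]
  have hsij : s i = s j := by
    have ki := key i
    have kj := key j
    rw [hπi] at ki; rw [hπj] at kj
    by_cases hcm : d + 1 < m
    · rw [ki.mpr (by omega), kj.mpr (by omega)]
    · have h1 : s i ≠ false := fun hc => by have := ki.mp hc; omega
      have h2 : s j ≠ false := fun hc => by have := kj.mp hc; omega
      simp only [ne_eq, Bool.not_eq_false] at h1 h2
      rw [h1, h2]
  have hij : i ≤ j := (hb i j hsij).mpr (by rw [Fin.le_def]; omega)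
  have hne' : i ≠ j := by
    intro hc
    rw [hc] at hπi
    omega
  exact lt_of_le_of_ne hij hne'

lemma eq_sConf_of_matches {π : Equiv.Perm (Fin n)} {s : Fin n → Bool} (hm : Matches π s) :
    s = sConf π ((Finset.univ.filter fun i => s i = false).card) := by
  classical
  have key := key_of_matches hm
  funext i
  have ki := key i
  simp only [sConf]
  cases hsv : s i with
  | false =>
    have := ki.mp hsv
    simp [this]
  | true =>
    have hge : (Finset.univ.filter fun i => s i = false).card ≤ (π i : ℕ) := by
      by_contra hc
      have := ki.mpr (by omega)
      rw [hsv] at this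
      exact absurd this (by simp)
    simp [hge]

lemma sConf_inj {π : Equiv.Perm (Fin n)} {m₁ m₂ : ℕ} (h₁ : m₁ ≤ n) (h₂ : m₂ ≤ n)
    (heq : sConf π m₁ = sConf π m₂) : m₁ = m₂ := by
  by_contra hne
  rcases Nat.lt_or_ge m₁ m₂ with hlt | hge
  · have hm1 : m₁ < n := by omega
    have := congrFun heq (π⁻¹ ⟨m₁, hm1⟩)
    simp [sConf] at this
    omega
  · have hlt : m₂ < m₁ := by omega
    have hm2 : m₂ < n := by omega
    have := congrFun heq (π⁻¹ ⟨m₂, hm2⟩)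
    simp [sConf] at this
    omega

/-- The descent set of `π⁻¹`. -/
def DSet (π : Equiv.Perm (Fin n)) : Finset (Fin n) :=
  Finset.univ.filter fun i : Fin n =>
    ∃ h : (i : ℕ) + 1 < n, π⁻¹ ⟨(i : ℕ) + 1, h⟩ < π⁻¹ i

lemma numDescents_inv_eq (π : Equiv.Perm (Fin n)) : numDescents π⁻¹ = (DSet π).card := rfl

lemma good_iff_dset {π : Equiv.Perm (Fin n)} {m : ℕ} :
    Good π m ↔ ∀ i ∈ DSet π, (i : ℕ) + 1 = m := by
  constructor
  · intro hg i hi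
    rw [DSet, Finset.mem_filter] at hi
    obtain ⟨-, hlt, hdesc⟩ := hi
    by_contra hne
    have := hg i hlt hne
    have heta : (⟨(i : ℕ), by omega⟩ : Fin n) = i := rfl
    rw [heta] at this
    exact absurd hdesc (not_lt.mpr (le_of_lt this))
  · intro hd d hlt hne
    have hdn : d < n := by omega
    set i : Fin n := ⟨d, hdn⟩ with hidef
    have hni : i ∉ DSet π := by
      intro hc
      exact hne (hd i hc)
    rw [DSet, Finset.mem_filter] at hni
    push_neg at hni
    have := hni (Finset.mem_univ _) hlt
    have hneq : π⁻¹ (⟨d, by omega⟩ : Fin n) ≠ π⁻¹ ⟨d + 1, hlt⟩ := by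
      intro hc
      have := π⁻¹.injective hc
      simp [Fin.ext_iff] at this
    exact lt_of_le_of_ne this hneq

lemma fin_le_apply {f : Fin n → Fin n} (hf : StrictMono f) (x : Fin n) :
    (x : ℕ) ≤ (f x : ℕ) := by
  suffices H : ∀ k : ℕ, ∀ x : Fin n, (x : ℕ) ≤ k → (x : ℕ) ≤ (f x : ℕ) from
    H (x : ℕ) x le_rfl
  intro k
  induction k with
  | zero =>
    intro x hx
    omega
  | succ k ih =>
    intro x hx
    rcases Nat.lt_or_ge (x : ℕ) (k + 1) with h | h
    · exact ih x (by omega)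
    · have hx' : (x : ℕ) = k + 1 := by omega
      have hyn : k < n := by have := x.isLt; omega
      have h1 : ((⟨k, hyn⟩ : Fin n) : ℕ) ≤ (f ⟨k, hyn⟩ : ℕ) := ih _ (by simp)
      have h2 : f ⟨k, hyn⟩ < f x := hf (by rw [Fin.lt_def]; simp only [Fin.val_mk]; omega)
      rw [Fin.lt_def] at h2
      simp only [Fin.val_mk] at h1
      omega

lemma pi_eq_one_of_dset_empty {π : Equiv.Perm (Fin n)} (hD : DSet π = ∅) : π = 1 := by
  have hg : Good π 0 := by
    rw [good_iff_dset, hD]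
    intro i hi
    exact absurd hi (Finset.notMem_empty _)
  have hmono : StrictMono (π⁻¹ : Equiv.Perm (Fin n)) := by
    intro a b hab
    exact good_mono hg hab (Or.inr (Nat.zero_le _))
  have hmono' : StrictMono (π : Equiv.Perm (Fin n)) := by
    intro a b hab
    rcases lt_trichotomy (π a) (π b) with h | h | h
    · exact h
    · exact absurd (π.injective h) (ne_of_lt hab)
    · have := hmono h
      simp only [Equiv.Perm.inv_def, Equiv.symm_apply_apply] at this
      exact absurd hab (not_lt.mpr (le_of_lt this))
  ext x
  have h1 : (x : ℕ) ≤ (π x : ℕ) := fin_le_apply hmono' x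
  have h2 : ((π x : Fin n) : ℕ) ≤ ((π⁻¹ (π x) : Fin n) : ℕ) := fin_le_apply hmono (π x)
  simp only [Equiv.Perm.inv_def, Equiv.symm_apply_apply] at h2
  have : π x = x := Fin.ext (by omega)
  simp [this]

lemma card_matches (π : Equiv.Perm (Fin n)) :
    (Finset.univ.filter fun s : Fin n → Bool => Matches π s).card
      = if π = 1 then n + 1 else if numDescents π⁻¹ = 1 then 1 else 0 := by
  classical
  have hset : (Finset.univ.filter fun s : Fin n → Bool => Matches π s)
      = ((Finset.range (n + 1)).filter fun m => Good π m).image (sConf π) := by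
    ext s
    simp only [Finset.mem_filter, Finset.mem_univ, true_and, Finset.mem_image,
      Finset.mem_range]
    constructor
    · intro hm
      refine ⟨(Finset.univ.filter fun i => s i = false).card,
        ⟨by have := Finset.card_filter_le (Finset.univ : Finset (Fin n))
              (fun i => s i = false)
            simp only [Finset.card_univ, Fintype.card_fin] at this
            omega,
         good_of_matches hm⟩, (eq_sConf_of_matches hm).symm⟩
    · rintro ⟨m, ⟨-, hg⟩, rfl⟩
      exact matches_of_good hg
  rw [hset, Finset.card_image_of_injOn (fun m₁ hm₁ m₂ hm₂ heq => by
    simp only [Finset.coe_filter, Finset.mem_range, Set.mem_setOf_eq] at hm₁ hm₂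
    exact sConf_inj (by omega) (by omega) heq)]
  rw [numDescents_inv_eq]
  by_cases h1 : π = 1
  · rw [if_pos h1]
    have hD : DSet π = ∅ := by
      unfold DSet
      rw [Finset.filter_eq_empty_iff]
      rintro i - ⟨hlt, hdesc⟩
      rw [h1] at hdesc
      simp only [inv_one, Equiv.Perm.one_apply] at hdesc
      rw [Fin.lt_def] at hdesc
      simp at hdesc
    have : ((Finset.range (n + 1)).filter fun m => Good π m) = Finset.range (n + 1) := by
      rw [Finset.filter_eq_self]
      intro m _
      rw [good_iff_dset, hD]
      intro i hi
      exact absurd hi (Finset.notMem_empty _)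
    rw [this, Finset.card_range]
  · rw [if_neg h1]
    have hDne : (DSet π).Nonempty := by
      rw [Finset.nonempty_iff_ne_empty]
      intro hc
      exact h1 (pi_eq_one_of_dset_empty hc)
    by_cases h2 : (DSet π).card = 1
    · rw [if_pos h2]
      obtain ⟨d0, hd0⟩ := Finset.card_eq_one.mp h2
      have hd0mem : d0 ∈ DSet π := by rw [hd0]; exact Finset.mem_singleton_self _
      have hd0lt : (d0 : ℕ) + 1 < n := by
        rw [DSet, Finset.mem_filter] at hd0mem
        exact hd0mem.2.1
      have : ((Finset.range (n + 1)).filter fun m => Good π m) = {(d0 : ℕ) + 1} := by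
        ext m
        simp only [Finset.mem_filter, Finset.mem_range, Finset.mem_singleton]
        constructor
        · rintro ⟨-, hg⟩
          exact ((good_iff_dset.mp hg) d0 hd0mem).symm
        · rintro rfl
          refine ⟨by omega, ?_⟩
          rw [good_iff_dset, hd0]
          intro i hi
          rw [Finset.mem_singleton] at hi
          rw [hi]
      rw [this, Finset.card_singleton]
    · rw [if_neg h2]
      have hcard2 : 1 < (DSet π).card := by
        have := Finset.card_pos.mpr hDne
        omega
      obtain ⟨d1, hd1, d2, hd2, hne⟩ := Finset.one_lt_card.mp hcard2
      rw [Finset.card_eq_zero, Finset.filter_eq_empty_iff]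
      rintro m - hg
      have h1' := good_iff_dset.mp hg d1 hd1
      have h2' := good_iff_dset.mp hg d2 hd2
      exact hne (Fin.ext (by omega))

end LO321

open MeasureTheory ProbabilityTheory

/-- The random total order on `ℤ` built from i.i.d. fair signs `B` (with `false = −`,
`true = +`): `x ≼ y` iff (`B x = −` and `B y = +`) or (`B x = B y` and `x ≤ y`). -/
def ordRel {Ω : Type*} (B : ℤ → Ω → Bool) (ω : Ω) (x y : ℤ) : Prop :=
  (B x ω = false ∧ B y ω = true) ∨ (B x ω = B y ω ∧ x ≤ y)

lemma LO321.ofReal_nat_div (c N : ℕ) :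
    ENNReal.ofReal ((c : ℝ) / 2 ^ N) = (c : ENNReal) * (2 : ENNReal)⁻¹ ^ N := by
  rw [div_eq_mul_inv, ← inv_pow, ENNReal.ofReal_mul (by positivity), ENNReal.ofReal_natCast]
  congr 1
  rw [ENNReal.ofReal_pow (by norm_num), ENNReal.ofReal_inv_of_pos (by norm_num)]
  norm_num

/-- **The limiting order for 321-avoiding permutations.** Let `(B_x)_{x ∈ ℤ}` be i.i.d. fair
Bernoulli signs and let `≼` be the induced random total order on `ℤ`.  Then, for every
`h ≥ 1` and every `π ∈ Av^(2h+1)(321)`, the probability that the restriction of `≼` to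
`[−h,h]` induces the pattern `π` — i.e. `(i−h−1) ≼ (j−h−1) ↔ π_i ≤ π_j` for all
`i,j ∈ [1,2h+1]` (0-indexed below) — equals `P_321(π)`. -/
theorem limiting_order_321_pattern_probability
    {Ω : Type*} [MeasurableSpace Ω] (μ : Measure Ω) [IsProbabilityMeasure μ]
    (B : ℤ → Ω → Bool) (hmeas : ∀ x : ℤ, Measurable (B x))
    (hindep : iIndepFun B μ)
    (hfair : ∀ x : ℤ, μ {ω | B x ω = true} = 1 / 2)
    {h : ℕ} (hh : 1 ≤ h) (π : Equiv.Perm (Fin (2 * h + 1))) (hπ : Avoids perm321 π) :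
    μ {ω | ∀ i j : Fin (2 * h + 1),
        ordRel B ω (((i : ℕ) : ℤ) - (h : ℤ)) (((j : ℕ) : ℤ) - (h : ℤ)) ↔ π i ≤ π j}
      = ENNReal.ofReal (P321 π) := by
  classical
  have einj : Function.Injective (fun i : Fin (2*h+1) => ((i : ℕ) : ℤ) - (h : ℤ)) := by
    intro a b hab
    simp only at hab
    exact Fin.ext (by omega)
  set A : Finset (Fin (2*h+1) → Bool) :=
    Finset.univ.filter fun s => LO321.Matches π s with hA
  have hle : ∀ i j : Fin (2*h+1), ((((i:ℕ):ℤ) - (h:ℤ)) ≤ (((j:ℕ):ℤ) - (h:ℤ))) ↔ i ≤ j := by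
    intro i j; rw [Fin.le_def]; omega
  have hord : ∀ (ω : Ω) (i j : Fin (2*h+1)),
      ordRel B ω (((i:ℕ):ℤ) - (h:ℤ)) (((j:ℕ):ℤ) - (h:ℤ)) ↔
      ((B (((i:ℕ):ℤ) - (h:ℤ)) ω = false ∧ B (((j:ℕ):ℤ) - (h:ℤ)) ω = true) ∨
       (B (((i:ℕ):ℤ) - (h:ℤ)) ω = B (((j:ℕ):ℤ) - (h:ℤ)) ω ∧ i ≤ j)) := by
    intro ω i j
    unfold ordRel
    rw [hle i j]
  have hset : {ω | ∀ i j : Fin (2*h+1),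
        ordRel B ω (((i:ℕ):ℤ) - (h:ℤ)) (((j:ℕ):ℤ) - (h:ℤ)) ↔ π i ≤ π j}
      = ⋃ s ∈ A, {ω | ∀ i : Fin (2*h+1), B (((i:ℕ):ℤ) - (h:ℤ)) ω = s i} := by
    ext ω
    simp only [Set.mem_setOf_eq, Set.mem_iUnion, hA, Finset.mem_filter, Finset.mem_univ,
      true_and, exists_prop]
    constructor
    · intro hω
      refine ⟨fun i => B (((i:ℕ):ℤ) - (h:ℤ)) ω, ?_, fun i => rfl⟩
      intro i j
      rw [← hω i j]
      exact (hord ω i j).symm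
    · rintro ⟨s, hs, hB⟩ i j
      rw [hord ω i j, hB i, hB j]
      exact hs i j
  have hEs : ∀ s : Fin (2*h+1) → Bool,
      μ {ω | ∀ i : Fin (2*h+1), B (((i:ℕ):ℤ) - (h:ℤ)) ω = s i} = (2:ENNReal)⁻¹ ^ (2*h+1) := by
    intro s
    have hhalf : ∀ (x : ℤ) (b : Bool), μ (B x ⁻¹' {b}) = (2:ENNReal)⁻¹ := by
      intro x b
      have htrue : μ (B x ⁻¹' {true}) = (2:ENNReal)⁻¹ := by
        have hs : B x ⁻¹' {true} = {ω | B x ω = true} := by ext ω; simp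
        rw [hs, hfair x]
        norm_num
      cases b with
      | true => exact htrue
      | false =>
        have hcompl : B x ⁻¹' {false} = (B x ⁻¹' {true})ᶜ := by
          ext ω; simp
        rw [hcompl, measure_compl (hmeas x (measurableSet_singleton _)) (measure_ne_top μ _),
          htrue, measure_univ]
        norm_num
    set c : ℤ → Bool :=
      fun x => s ⟨(x + (h:ℤ)).toNat % (2*h+1), Nat.mod_lt _ (by omega)⟩ with hc
    have hce : ∀ i : Fin (2*h+1), c (((i:ℕ):ℤ) - (h:ℤ)) = s i := by
      intro i
      simp only [hc]
      congr 1
      apply Fin.ext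
      simp only [Fin.val_mk]
      have heq : ((i:ℕ):ℤ) - (h:ℤ) + (h:ℤ) = ((i:ℕ):ℤ) := by ring
      rw [heq, Int.toNat_natCast, Nat.mod_eq_of_lt i.isLt]
    have hEset : {ω | ∀ i : Fin (2*h+1), B (((i:ℕ):ℤ) - (h:ℤ)) ω = s i}
        = ⋂ x ∈ Finset.image (fun i : Fin (2*h+1) => ((i:ℕ):ℤ) - (h:ℤ)) Finset.univ,
            B x ⁻¹' {c x} := by
      ext ω
      simp only [Set.mem_setOf_eq, Set.mem_iInter, Finset.mem_image, Finset.mem_univ,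
        true_and, Set.mem_preimage, Set.mem_singleton_iff, forall_exists_index]
      constructor
      · intro hω x i hi
        subst hi
        rw [hce i]
        exact hω i
      · intro hω i
        have := hω _ i rfl
        rwa [hce i] at this
    rw [hEset, hindep.meas_biInter (fun x _ => ⟨{c x}, measurableSet_singleton _, rfl⟩)]
    rw [Finset.prod_image (fun a _ b _ hab => einj hab)]
    simp [hhalf, Finset.prod_const]
  rw [hset, measure_biUnion_finset ?hd ?hm]
  case hd =>
    intro s hs t ht hst
    rw [Function.onFun, Set.disjoint_left]
    intro ω hω1 hω2
    exact hst (funext fun i => (hω1 i).symm.trans (hω2 i))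
  case hm =>
    intro s _
    have hs : {ω | ∀ i : Fin (2*h+1), B (((i:ℕ):ℤ) - (h:ℤ)) ω = s i}
        = ⋂ i : Fin (2*h+1), B (((i:ℕ):ℤ) - (h:ℤ)) ⁻¹' {s i} := by
      ext ω; simp
    rw [hs]
    exact MeasurableSet.iInter fun i => hmeas _ (measurableSet_singleton _)
  rw [Finset.sum_congr rfl fun s _ => hEs s, Finset.sum_const, hA,
    LO321.card_matches π]
  unfold P321
  by_cases h1 : π = 1
  · rw [if_pos h1, if_pos h1]
    have hcast : ((2*h+1 : ℕ) : ℝ) + 1 = ((2*h+2 : ℕ) : ℝ) := by push_cast; ring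
    rw [hcast, LO321.ofReal_nat_div (2*h+2) (2*h+1), nsmul_eq_mul]
  · rw [if_neg h1, if_neg h1]
    by_cases h2 : numDescents π⁻¹ = 1
    · rw [if_pos h2, if_pos h2]
      have : (1:ℝ) = ((1:ℕ):ℝ) := by norm_num
      rw [this, LO321.ofReal_nat_div 1 (2*h+1), nsmul_eq_mul]
    · rw [if_neg h2, if_neg h2]
      simp
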